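/- Solidarity from random-scan to deterministic-scan: let K₁,…,K_d be self-adjoint Markov contraction operators on L²(Π), each satisfying K_jP_j = P_jK_j = P_j for orthogonal projections P_j with ‖K_j − P_j‖ ≤ λ₀ < 1. Let P_RCW = (1/d)Σⱼ K_j and P_DCW = K_d⋯K₁, and let Π also denote the rank-one projection onto constants satisfying ΠK_j = K_jΠ = Π for all j. If ‖P_RCW − Π‖ ≤ 1 − η for some η ∈ (0,1], then ‖P_DCW − Π‖ ≤ 1 − (1−λ₀)²·η/(8(d+1)(1+λ₀)). -/
import Mathlib


open ContinuousLinearMap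
open scoped RealInnerProductSpace

section Aux
variable {H : Type*} [NormedAddCommGroup H] [InnerProductSpace ℝ H] [CompleteSpace H]

-- symmetry access
example (K : H →L[ℝ] H) (hK : IsSelfAdjoint K) (x y : H) : ⟪K x, y⟫ = ⟪x, K y⟫ :=
  hK.isSymmetric x y

-- step A
lemma stepA (K P : H →L[ℝ] H) (lam0 : ℝ) (hl0 : 0 ≤ lam0) (hl1 : lam0 ≤ 1)
    (hPsa : IsSelfAdjoint P) (hPidem : P ∘L P = P) (hKsa : IsSelfAdjoint K)
    (hKP : K ∘L P = P) (hPK : P ∘L K = P) (hdiff : ‖K - P‖ ≤ lam0) (g : H) :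
    ‖K g‖ ^ 2 ≤ ‖g‖ ^ 2 - (1 - lam0) * ⟪g - K g, g⟫ := by
  set u : H := P g with hu
  set v : H := g - P g with hv
  set R : H →L[ℝ] H := K - P with hR
  have hguv : g = u + v := by simp [hu, hv]
  have hKu : K u = u := by
    have := congrArg (fun T : H →L[ℝ] H => T g) hKP
    simpa using this
  have hPv : P v = 0 := by
    have := congrArg (fun T : H →L[ℝ] H => T g) hPidem
    simp only [comp_apply] at this
    simp [hv, map_sub, this]
  have hRv : R v = K v := by simp [hR, sub_apply, hPv]
  have hKg : K g = u + R v := by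
    rw [hguv, map_add, hKu, hRv]
  have hRu : R u = 0 := by
    have : (R ∘L P) = 0 := by rw [hR, sub_comp, hKP, hPidem, sub_self]
    have := congrArg (fun T : H →L[ℝ] H => T g) this
    simpa using this
  have hPRv : P (R v) = 0 := by
    have : (P ∘L R) = 0 := by rw [hR, comp_sub, hPK, hPidem, sub_self]
    have := congrArg (fun T : H →L[ℝ] H => T v) this
    simpa using this
  have hRsa : IsSelfAdjoint R := hKsa.sub hPsa
  have horth1 : ⟪u, v⟫ = 0 := by
    have h1 : ⟪P g, v⟫ = ⟪g, P v⟫ := hPsa.isSymmetric g v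
    rw [hPv] at h1; simpa [hu] using h1
  have horth2 : ⟪u, R v⟫ = 0 := by
    have h1 : ⟪P g, R v⟫ = ⟪g, P (R v)⟫ := hPsa.isSymmetric g (R v)
    rw [hPRv] at h1; simpa [hu] using h1
  have horth3 : ⟪R v, u⟫ = 0 := by
    have h1 : ⟪R v, u⟫ = ⟪v, R u⟫ := by simpa using hRsa.isSymmetric v u
    rw [h1, hRu, inner_zero_right]
  have hRvnorm : ‖R v‖ ≤ lam0 * ‖v‖ :=
    le_trans (R.le_opNorm v) (mul_le_mul_of_nonneg_right hdiff (norm_nonneg v))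
  have hKg2 : ‖K g‖ ^ 2 = ‖u‖ ^ 2 + ‖R v‖ ^ 2 := by
    rw [hKg, norm_add_sq_real, horth2]; ring
  have hg2 : ‖g‖ ^ 2 = ‖u‖ ^ 2 + ‖v‖ ^ 2 := by
    rw [hguv, norm_add_sq_real, horth1]; ring
  have hinner : ⟪g - K g, g⟫ = ‖v‖ ^ 2 - ⟪R v, v⟫ := by
    have hsub : g - K g = v - R v := by rw [hKg, hguv]; abel
    rw [hsub, hguv]
    have horth1' : ⟪v, u⟫ = 0 := by rw [real_inner_comm]; exact horth1
    simp [inner_sub_left, inner_add_right, horth1', horth3, real_inner_self_eq_norm_sq]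
  have h2 : -(‖R v‖ * ‖v‖) ≤ ⟪R v, v⟫ :=
    neg_le_of_neg_le (le_trans (neg_le_abs _) (abs_real_inner_le_norm _ _))
  have h1 : 0 ≤ (lam0 * ‖v‖ - ‖R v‖) * (‖v‖ + ‖R v‖) :=
    mul_nonneg (by linarith) (by positivity)
  rw [hKg2, hg2, hinner]
  nlinarith [mul_le_mul_of_nonneg_left h2 (show (0:ℝ) ≤ 1 - lam0 by linarith), h1]

end Aux

section Aux2
variable {H : Type*} [NormedAddCommGroup H] [InnerProductSpace ℝ H] [CompleteSpace H]

lemma stepB (K : H →L[ℝ] H) (hK : ‖K‖ ≤ 1) (x : H) :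
    ‖x - K x‖ ^ 2 ≤ 2 * ⟪x - K x, x⟫ := by
  have h1 : ‖K x‖ ≤ ‖x‖ := by
    have := K.le_opNorm x
    nlinarith [norm_nonneg x]
  rw [norm_sub_sq_real, inner_sub_left, real_inner_self_eq_norm_sq,
    real_inner_comm (K x) x]
  nlinarith [norm_nonneg x, norm_nonneg (K x)]

lemma qnonneg (K : H →L[ℝ] H) (hK : ‖K‖ ≤ 1) (x : H) : 0 ≤ ⟪x - K x, x⟫ := by
  have := stepB K hK x
  nlinarith [sq_nonneg ‖x - K x‖]

lemma qexpand (K : H →L[ℝ] H) (hKsa : IsSelfAdjoint K) (a b : H) :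
    ⟪(a + b) - K (a + b), a + b⟫ = ⟪a - K a, a⟫ + 2 * ⟪a - K a, b⟫ + ⟪b - K b, b⟫ := by
  have hs2 : ⟪K b, a⟫ = ⟪K a, b⟫ := by
    have h1 : ⟪K b, a⟫ = ⟪b, K a⟫ := by simpa using hKsa.isSymmetric b a
    rw [h1, real_inner_comm]
  have e1 : (a + b) - K (a + b) = (a - K a) + (b - K b) := by rw [map_add]; abel
  rw [e1]
  simp only [inner_add_left, inner_add_right, inner_sub_left]
  rw [real_inner_comm b a, hs2]
  ring

lemma quadform (K : H →L[ℝ] H) (hKsa : IsSelfAdjoint K) (hK : ‖K‖ ≤ 1) (x w : H) :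
    ⟪(x + w) - K (x + w), x + w⟫ ≤ 2 * ⟪x - K x, x⟫ + 4 * ‖w‖ ^ 2 := by
  have hww : ⟪w - K w, w⟫ ≤ 2 * ‖w‖ ^ 2 := by
    have h1 : ‖K w‖ ≤ ‖w‖ := by
      have := K.le_opNorm w; nlinarith [norm_nonneg w]
    have h2 : -(‖K w‖ * ‖w‖) ≤ ⟪K w, w⟫ :=
      neg_le_of_neg_le (le_trans (neg_le_abs _) (abs_real_inner_le_norm _ _))
    rw [inner_sub_left, real_inner_self_eq_norm_sq]
    nlinarith [norm_nonneg w]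
  have key1 : 0 ≤ ⟪x - K x, x⟫ - 2 * ⟪x - K x, w⟫ + ⟪w - K w, w⟫ := by
    have h0 := qnonneg K hK (x + -w)
    rw [qexpand K hKsa x (-w)] at h0
    simp only [inner_neg_right, map_neg, sub_neg_eq_add, mul_neg] at h0
    have e : (-w + K w) = -(w - K w) := by abel
    rw [e, inner_neg_left] at h0
    linarith
  rw [qexpand K hKsa x w]
  linarith [qnonneg K hK w]

end Aux2

section Aux3
variable {H : Type*} [NormedAddCommGroup H] [InnerProductSpace ℝ H] [CompleteSpace H]

lemma prodTakeSucc {d : ℕ} (K : Fin d → H →L[ℝ] H) (i : ℕ) (hi : i < d) (x : H) :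
    ((List.ofFn K).take (i+1)).reverse.prod x
      = K ⟨i, hi⟩ (((List.ofFn K).take i).reverse.prod x) := by
  have hlen : i < (List.ofFn K).length := by simpa using hi
  have ht : (List.ofFn K).take (i+1) = (List.ofFn K).take i ++ [K ⟨i, hi⟩] := by
    rw [← List.take_concat_get' _ i hlen]
    simp [List.getElem_ofFn]
  rw [ht, List.reverse_append]
  simp [mul_apply]

lemma prodTakeFull {d : ℕ} (K : Fin d → H →L[ℝ] H) :
    ((List.ofFn K).take d) = List.ofFn K :=
  List.take_of_length_le (by simp)

end Aux3

section Core
variable {H : Type*} [NormedAddCommGroup H] [InnerProductSpace ℝ H] [CompleteSpace H]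

set_option maxHeartbeats 1000000 in
lemma core {d : ℕ} (hd : 0 < d)
    (K P : Fin d → H →L[ℝ] H)
    (hPsa : ∀ j, IsSelfAdjoint (P j)) (hPidem : ∀ j, P j ∘L P j = P j)
    (hKsa : ∀ j, IsSelfAdjoint (K j)) (hKnorm : ∀ j, ‖K j‖ ≤ 1)
    (hKP : ∀ j, K j ∘L P j = P j) (hPK : ∀ j, P j ∘L K j = P j)
    (Pi0 : H →L[ℝ] H)
    (lam0 : ℝ) (hl0 : 0 ≤ lam0) (hlam0 : lam0 < 1) (hdiff : ∀ j, ‖K j - P j‖ ≤ lam0)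
    (η : ℝ) (hη0 : 0 < η) (hη1 : η ≤ 1)
    (hRCW : ‖(d : ℝ)⁻¹ • (∑ j, K j) - Pi0‖ ≤ 1 - η)
    (h : H) (hPih : Pi0 h = 0) :
    ‖(List.ofFn K).reverse.prod h‖ ≤ (1 - (1 - lam0) * η / (8 * (d : ℝ))) * ‖h‖ := by
  have hd0 : (0:ℝ) < (d:ℝ) := by exact_mod_cast hd
  have hd1 : (1:ℝ) ≤ (d:ℝ) := by exact_mod_cast hd
  have hl1 : lam0 ≤ 1 := le_of_lt hlam0
  set G : ℕ → H := fun n => (((List.ofFn K).take n).reverse.prod) h with hG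
  have hG0 : G 0 = h := by simp [hG]
  have hGs : ∀ i (hi : i < d), G (i+1) = K ⟨i, hi⟩ (G i) := fun i hi => prodTakeSucc K i hi h
  set e : ℕ → ℝ := fun i => ⟪G i - G (i+1), G i⟫ with he
  set E : ℝ := ∑ i ∈ Finset.range d, e i with hE
  -- basic facts
  have f1 : ∀ i (hi : i < d), ‖G (i+1)‖^2 ≤ ‖G i‖^2 - (1 - lam0) * e i := by
    intro i hi
    have : e i = ⟪G i - K ⟨i, hi⟩ (G i), G i⟫ := by simp only [he]; rw [hGs i hi]
    rw [this, hGs i hi]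
    exact stepA (K _) (P _) lam0 hl0 hl1 (hPsa _) (hPidem _) (hKsa _) (hKP _) (hPK _)
      (hdiff _) (G i)
  have f2 : ∀ i (hi : i < d), 0 ≤ e i := by
    intro i hi
    have : e i = ⟪G i - K ⟨i, hi⟩ (G i), G i⟫ := by simp only [he]; rw [hGs i hi]
    rw [this]; exact qnonneg (K _) (hKnorm _) (G i)
  have f3 : ∀ i (hi : i < d), ‖G i - G (i+1)‖^2 ≤ 2 * e i := by
    intro i hi
    have h1 : e i = ⟪G i - K ⟨i, hi⟩ (G i), G i⟫ := by simp only [he]; rw [hGs i hi]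
    rw [h1, hGs i hi]; exact stepB (K _) (hKnorm _) (G i)
  have hEnn : 0 ≤ E := Finset.sum_nonneg (fun i hi => f2 i (Finset.mem_range.1 hi))
  have hpartial : ∀ n, n ≤ d → ∑ i ∈ Finset.range n, e i ≤ E := by
    intro n hn
    refine Finset.sum_le_sum_of_subset_of_nonneg
      (Finset.range_subset_range.2 hn) (fun i hi _ => f2 i (Finset.mem_range.1 hi))
  -- telescoping
  have tele : ∀ n, n ≤ d → ‖G n‖^2 + (1 - lam0) * ∑ i ∈ Finset.range n, e i ≤ ‖h‖^2 := by
    intro n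
    induction n with
    | zero => intro _; simp [hG0]
    | succ n ih =>
      intro hn
      have hn' : n < d := hn
      have h1 := ih (le_of_lt hn')
      have h2 := f1 n hn'
      rw [Finset.sum_range_succ]
      have h3 := f2 n hn'
      nlinarith [h1, h2, h3]
  -- distance to start
  have dist1 : ∀ n, n ≤ d → ‖h - G n‖ ≤ ∑ i ∈ Finset.range n, ‖G i - G (i+1)‖ := by
    intro n
    induction n with
    | zero => intro _; simp [hG0]
    | succ n ih =>
      intro hn
      have h1 := ih (le_of_lt (Nat.lt_of_succ_le hn))
      have h2 : ‖h - G (n+1)‖ ≤ ‖h - G n‖ + ‖G n - G (n+1)‖ := by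
        have : h - G (n+1) = (h - G n) + (G n - G (n+1)) := by abel
        rw [this]; exact norm_add_le _ _
      rw [Finset.sum_range_succ]
      linarith
  have dist2 : ∀ n, n ≤ d → ‖h - G n‖^2 ≤ 2 * n * E := by
    intro n hn
    have h1 : ‖h - G n‖^2 ≤ (∑ i ∈ Finset.range n, ‖G i - G (i+1)‖)^2 :=
      pow_le_pow_left₀ (norm_nonneg _) (dist1 n hn) 2
    have h2 : (∑ i ∈ Finset.range n, ‖G i - G (i+1)‖)^2
        ≤ (n : ℝ) * ∑ i ∈ Finset.range n, ‖G i - G (i+1)‖^2 := by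
      simpa using sq_sum_le_card_mul_sum_sq (s := Finset.range n)
        (f := fun i => ‖G i - G (i+1)‖)
    have h3 : ∑ i ∈ Finset.range n, ‖G i - G (i+1)‖^2 ≤ 2 * E := by
      have h4 : ∑ i ∈ Finset.range n, ‖G i - G (i+1)‖^2
          ≤ ∑ i ∈ Finset.range n, 2 * e i := by
        refine Finset.sum_le_sum (fun i hi => f3 i ?_)
        exact lt_of_lt_of_le (Finset.mem_range.1 hi) hn
      rw [← Finset.mul_sum] at h4
      have := hpartial n hn
      nlinarith
    have hn0 : (0:ℝ) ≤ (n:ℝ) := Nat.cast_nonneg n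
    calc ‖h - G n‖^2 ≤ (n : ℝ) * ∑ i ∈ Finset.range n, ‖G i - G (i+1)‖^2 := le_trans h1 h2
      _ ≤ (n : ℝ) * (2 * E) := mul_le_mul_of_nonneg_left h3 hn0
      _ = 2 * n * E := by ring
  -- quadratic form bound
  have qbound : ∀ i (hi : i < d), ⟪h - K ⟨i, hi⟩ h, h⟫ ≤ 2 * e i + 8 * i * E := by
    intro i hi
    have hx : G i + (h - G i) = h := by abel
    have h1 := quadform (K ⟨i, hi⟩) (hKsa _) (hKnorm _) (G i) (h - G i)
    rw [hx] at h1
    have h2 := dist2 i (le_of_lt hi)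
    have h3 : e i = ⟪G i - K ⟨i, hi⟩ (G i), G i⟫ := by simp only [he]; rw [hGs i hi]
    rw [← h3] at h1
    linarith
  -- RCW bound
  have hSh : ⟪(∑ j, K j) h, h⟫ ≤ (d:ℝ) * ((1 - η) * ‖h‖^2) := by
    have hA : ((d:ℝ)⁻¹ • (∑ j, K j) - Pi0) h = (d:ℝ)⁻¹ • ((∑ j, K j) h) := by
      simp [ContinuousLinearMap.sub_apply, hPih]
    have h1 : ⟪((d:ℝ)⁻¹ • (∑ j, K j) - Pi0) h, h⟫ ≤ (1 - η) * ‖h‖^2 := by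
      refine le_trans (real_inner_le_norm _ _) ?_
      have h2 : ‖((d:ℝ)⁻¹ • (∑ j, K j) - Pi0) h‖ ≤ (1 - η) * ‖h‖ := by
        refine le_trans (le_opNorm _ _) ?_
        exact mul_le_mul_of_nonneg_right hRCW (norm_nonneg h)
      nlinarith [norm_nonneg h, norm_nonneg (((d:ℝ)⁻¹ • (∑ j, K j) - Pi0) h)]
    rw [hA, real_inner_smul_left] at h1
    have hd' : (d:ℝ) ≠ 0 := ne_of_gt hd0
    have := mul_le_mul_of_nonneg_left h1 (le_of_lt hd0)
    rw [← mul_assoc, mul_inv_cancel₀ hd', one_mul] at this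
    exact this
  have hsumq : (d:ℝ) * (η * ‖h‖^2) ≤ ∑ j : Fin d, ⟪h - K j h, h⟫ := by
    have h1 : ∑ j : Fin d, ⟪h - K j h, h⟫ = (d:ℝ) * ‖h‖^2 - ⟪(∑ j, K j) h, h⟫ := by
      rw [ContinuousLinearMap.sum_apply, sum_inner]
      simp only [inner_sub_left, Finset.sum_sub_distrib, real_inner_self_eq_norm_sq]
      simp [Finset.card_univ]
    rw [h1]
    nlinarith [hSh]
  -- convert fin sum to range sum and combine
  have hgauss : ∑ i ∈ Finset.range d, (i:ℝ) = (d:ℝ) * ((d:ℝ) - 1) / 2 := by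
    have h2 := Finset.sum_range_id_mul_two d
    have h3 := congrArg (Nat.cast : ℕ → ℝ) h2
    push_cast [Nat.cast_sub (Nat.one_le_iff_ne_zero.2 (Nat.pos_iff_ne_zero.1 hd))] at h3
    linarith
  have hconv : ∑ j : Fin d, ⟪h - K j h, h⟫
      ≤ 2 * E + 8 * E * ((d:ℝ) * ((d:ℝ) - 1) / 2) := by
    classical
    set F : ℕ → ℝ := fun i => if hi : i < d then ⟪h - K ⟨i, hi⟩ h, h⟫ else 0 with hF
    have h1 : ∑ j : Fin d, ⟪h - K j h, h⟫ = ∑ i ∈ Finset.range d, F i := by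
      rw [Finset.sum_range]
      refine Finset.sum_congr rfl (fun j _ => ?_)
      simp [hF, j.isLt]
    have h2 : ∑ i ∈ Finset.range d, F i
        ≤ ∑ i ∈ Finset.range d, (2 * e i + 8 * (i:ℝ) * E) := by
      refine Finset.sum_le_sum (fun i hi => ?_)
      have hid : i < d := Finset.mem_range.1 hi
      have hFi : F i = ⟪h - K ⟨i, hid⟩ h, h⟫ := by simp [hF, hid]
      rw [hFi]; exact qbound i hid
    have h3 : ∑ i ∈ Finset.range d, (2 * e i + 8 * (i:ℝ) * E)
        = 2 * E + 8 * E * ∑ i ∈ Finset.range d, (i:ℝ) := by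
      have h3a : ∑ i ∈ Finset.range d, (2 * e i + 8 * (i:ℝ) * E)
          = (∑ i ∈ Finset.range d, 2 * e i) + ∑ i ∈ Finset.range d, 8 * E * (i:ℝ) := by
        rw [Finset.sum_add_distrib]
        congr 1
        exact Finset.sum_congr rfl (fun i _ => by ring)
      rw [h3a, ← Finset.mul_sum, ← Finset.mul_sum, ← hE]
    rw [h1, ← hgauss]
    exact le_of_le_of_eq h2 h3
  -- extract spectral-gap information on E
  have hEl : η * ‖h‖^2 ≤ 4 * (d:ℝ) * E := by
    have h4 : (d:ℝ) * (η * ‖h‖^2) ≤ 2 * E + 8 * E * ((d:ℝ) * ((d:ℝ) - 1) / 2) :=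
      le_trans hsumq hconv
    have h5 : (d:ℝ) * (η * ‖h‖^2) ≤ (d:ℝ) * (4 * (d:ℝ) * E) := by
      nlinarith [h4, mul_nonneg hEnn (by linarith : (0:ℝ) ≤ 2*(d:ℝ)-1)]
    exact le_of_mul_le_mul_left h5 hd0
  set c : ℝ := (1 - lam0) * η / (8 * (d:ℝ)) with hc
  have hc8 : 8 * (d:ℝ) * c = (1 - lam0) * η := by
    rw [hc]; field_simp
  have hcnn : 0 ≤ c := by
    apply div_nonneg (mul_nonneg (by linarith) (le_of_lt hη0)) (by positivity)
  have hclt : c ≤ 1/8 := by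
    rw [hc, div_le_iff₀ (by positivity : (0:ℝ) < 8 * (d:ℝ))]
    nlinarith [hd1, hη0, hη1, hl0, hl1]
  have hsq : ‖G d‖^2 ≤ ((1 - c) * ‖h‖)^2 := by
    have t1 := tele d le_rfl
    rw [← hE] at t1
    have t2 : (1 - lam0) * (η * ‖h‖^2) ≤ (1 - lam0) * (4 * (d:ℝ) * E) :=
      mul_le_mul_of_nonneg_left hEl (by linarith)
    have hc8' : 8 * (d:ℝ) * c * ‖h‖^2 = (1 - lam0) * η * ‖h‖^2 := by rw [hc8]
    have t3 : 2 * c * ‖h‖^2 ≤ (1 - lam0) * E := by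
      have t2b : (4*(d:ℝ)) * (2*c*‖h‖^2) ≤ (4*(d:ℝ)) * ((1-lam0)*E) := by
        nlinarith [t2, hc8']
      exact le_of_mul_le_mul_left t2b (by positivity)
    nlinarith [t1, t3, sq_nonneg (c * ‖h‖), hcnn, norm_nonneg h]
  have hb : 0 ≤ (1 - c) * ‖h‖ := mul_nonneg (by linarith) (norm_nonneg h)
  have hnormGd : ‖G d‖ ≤ (1 - c) * ‖h‖ := by
    calc ‖G d‖ = Real.sqrt (‖G d‖^2) := (Real.sqrt_sq (norm_nonneg _)).symm
      _ ≤ Real.sqrt (((1 - c) * ‖h‖)^2) := Real.sqrt_le_sqrt hsq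
      _ = (1 - c) * ‖h‖ := Real.sqrt_sq hb
  have hfin : (List.ofFn K).reverse.prod h = G d := by
    simp only [hG]; rw [prodTakeFull]
  rw [hfin]
  calc ‖G d‖ ≤ (1 - c) * ‖h‖ := hnormGd
    _ = (1 - (1 - lam0) * η / (8 * (d:ℝ))) * ‖h‖ := by rw [hc]
end Core


/-- Solidarity from random-scan to deterministic-scan: `K₁,…,K_d` are self-adjoint Markov
contraction operators on `L²(Π)` with `K_jP_j = P_jK_j = P_j` for orthogonal projections
`P_j`, `‖K_j − P_j‖ ≤ λ₀ < 1`, `Π` the rank-one projection onto constants with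
`ΠK_j = K_jΠ = Π` (and `ΠP_j = P_jΠ = Π`).  If `‖P_RCW − Π‖ ≤ 1 − η` for some
`η ∈ (0,1]`, where `P_RCW = (1/d)Σⱼ K_j`, then the deterministic scan
`P_DCW = K_d⋯K₁` satisfies `‖P_DCW − Π‖ ≤ 1 − (1−λ₀)²η/(8(d+1)(1+λ₀))`. -/
theorem stmt8 {H : Type*} [NormedAddCommGroup H] [InnerProductSpace ℝ H] [CompleteSpace H]
    {d : ℕ} (hd : 0 < d)
    (K P : Fin d → H →L[ℝ] H) (Pi0 : H →L[ℝ] H)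
    (hPsa : ∀ j, IsSelfAdjoint (P j)) (hPidem : ∀ j, P j ∘L P j = P j)
    (hKsa : ∀ j, IsSelfAdjoint (K j)) (hKnorm : ∀ j, ‖K j‖ ≤ 1)
    (hKP : ∀ j, K j ∘L P j = P j) (hPK : ∀ j, P j ∘L K j = P j)
    (hPi0sa : IsSelfAdjoint Pi0) (hPi0idem : Pi0 ∘L Pi0 = Pi0)
    (hPiK : ∀ j, Pi0 ∘L K j = Pi0) (hKPi : ∀ j, K j ∘L Pi0 = Pi0)
    (hPiP : ∀ j, Pi0 ∘L P j = Pi0) (hPPi : ∀ j, P j ∘L Pi0 = Pi0)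
    (lam0 : ℝ) (hlam0 : lam0 < 1) (hdiff : ∀ j, ‖K j - P j‖ ≤ lam0)
    (η : ℝ) (hη : η ∈ Set.Ioc (0 : ℝ) 1)
    (hRCW : ‖(d : ℝ)⁻¹ • (∑ j, K j) - Pi0‖ ≤ 1 - η) :
    ‖(List.ofFn K).reverse.prod - Pi0‖
      ≤ 1 - (1 - lam0) ^ 2 * η / (8 * ((d : ℝ) + 1) * (1 + lam0)) := by
  obtain ⟨hη0, hη1⟩ := hη
  have hl0 : 0 ≤ lam0 := le_trans (norm_nonneg _) (hdiff ⟨0, hd⟩)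
  have hl1 : lam0 ≤ 1 := le_of_lt hlam0
  have hd0 : (0:ℝ) < (d:ℝ) := by exact_mod_cast hd
  have hd1 : (1:ℝ) ≤ (d:ℝ) := by exact_mod_cast hd
  set c : ℝ := (1 - lam0) * η / (8 * (d:ℝ)) with hc
  set δ : ℝ := (1 - lam0) ^ 2 * η / (8 * ((d:ℝ) + 1) * (1 + lam0)) with hδ
  have hcnn : 0 ≤ c := div_nonneg (mul_nonneg (by linarith) (le_of_lt hη0)) (by positivity)
  have hδnn : 0 ≤ δ := div_nonneg (mul_nonneg (by positivity) (le_of_lt hη0)) (by positivity)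
  have hA : (0:ℝ) ≤ (1 - lam0) * η := mul_nonneg (by linarith) (le_of_lt hη0)
  have hδc : δ ≤ c := by
    rw [hδ, hc, div_le_div_iff₀ (by positivity) (by positivity)]
    nlinarith [hA, mul_nonneg hA hl0, mul_nonneg (mul_nonneg hA hl0) hd0.le]
  have hc8 : c ≤ 1/8 := by
    rw [hc, div_le_iff₀ (by positivity : (0:ℝ) < 8 * (d:ℝ))]
    nlinarith [hd1, hη0, hη1, hl0, hl1]
  refine opNorm_le_bound _ (by linarith) (fun f => ?_)
  set h : H := f - Pi0 f with hh
  have hPih : Pi0 h = 0 := by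
    have h1 := congrArg (fun T : H →L[ℝ] H => T f) hPi0idem
    simp only [comp_apply] at h1
    simp [hh, map_sub, h1]
  have hhle : ‖h‖ ≤ ‖f‖ := by
    have horth : ⟪Pi0 f, h⟫ = 0 := by
      have h1 : ⟪Pi0 f, h⟫ = ⟪f, Pi0 h⟫ := by simpa using hPi0sa.isSymmetric f h
      rw [h1, hPih, inner_zero_right]
    have h2 : ‖Pi0 f + h‖^2 = ‖Pi0 f‖^2 + ‖h‖^2 := by
      rw [norm_add_sq_real, horth]; ring
    have h3 : Pi0 f + h = f := by simp [hh]
    rw [h3] at h2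
    nlinarith [norm_nonneg f, norm_nonneg h, sq_nonneg ‖Pi0 f‖]
  have hLPi : (List.ofFn K).reverse.prod (Pi0 f) = Pi0 f := by
    have key : ∀ n, n ≤ d → ((List.ofFn K).take n).reverse.prod (Pi0 f) = Pi0 f := by
      intro n
      induction n with
      | zero => intro _; simp
      | succ n ih =>
        intro hn
        have hn' : n < d := hn
        rw [prodTakeSucc K n hn' (Pi0 f), ih (le_of_lt hn')]
        have h1 := congrArg (fun T : H →L[ℝ] H => T f) (hKPi ⟨n, hn'⟩)
        simpa using h1
    have h1 := key d le_rfl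
    rwa [prodTakeFull] at h1
  have happ : ((List.ofFn K).reverse.prod - Pi0) f = (List.ofFn K).reverse.prod h := by
    simp only [ContinuousLinearMap.sub_apply]
    have h3 : f = h + Pi0 f := by simp [hh]
    have h4 : (List.ofFn K).reverse.prod f
        = (List.ofFn K).reverse.prod h + Pi0 f := by
      calc (List.ofFn K).reverse.prod f
          = (List.ofFn K).reverse.prod (h + Pi0 f) := by rw [← h3]
        _ = (List.ofFn K).reverse.prod h + (List.ofFn K).reverse.prod (Pi0 f) :=
            map_add _ _ _
        _ = (List.ofFn K).reverse.prod h + Pi0 f := by rw [hLPi]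
    rw [h4]; abel
  rw [happ]
  have hcore := core hd K P hPsa hPidem hKsa hKnorm hKP hPK Pi0 lam0 hl0 hlam0 hdiff
    η hη0 hη1 hRCW h hPih
  rw [← hc] at hcore
  calc ‖(List.ofFn K).reverse.prod h‖ ≤ (1 - c) * ‖h‖ := hcore
    _ ≤ (1 - c) * ‖f‖ := mul_le_mul_of_nonneg_left hhle (by linarith)
    _ ≤ (1 - δ) * ‖f‖ := mul_le_mul_of_nonneg_right (by linarith) (norm_nonneg f)
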